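/- Let G be a 2-connected plane graph and let Φ_k (k ≥ 4) be the internally triangulated gadget consisting of a k-cycle C_k = c_1, ..., c_k, a K4 on vertices {a,b,c,d}, edges (d, c_i) for all i, and edges (c_1,b), (c_1,c), (c_2,c) (and (c_1,d) already present), embedded with C_k as its outer face. If G' is obtained from G by identifying a face f of size k of G with the outer cycle of Φ_k, then G' is 2-connected and α(G') = α(G) + 1. -/

import Mathlib

open Sum

/-- A set of vertices is independent if its vertices are pairwise non-adjacent. -/
def SimpleGraph.IsIndepVertexSet {V : Type*} (G : SimpleGraph V) (I : Set V) : Prop :=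
  I.Pairwise fun a b => ¬ G.Adj a b

/-- The independence number `α G`. -/
noncomputable def SimpleGraph.indepNumOld {V : Type*} (G : SimpleGraph V) : ℕ :=
  sSup {n | ∃ s : Finset V, G.IsIndepVertexSet ↑s ∧ s.card = n}

/-- `G` is 2-connected: at least 3 vertices, connected, and no cutvertex. -/
def SimpleGraph.TwoConnected {V : Type*} [Fintype V] (G : SimpleGraph V) : Prop :=
  3 ≤ Fintype.card V ∧ G.Connected ∧
    ∀ a : V, (((⊤ : G.Subgraph).deleteVerts {a}).coe.Connected)

/- ### Auxiliary lemmas -/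

lemma aux_bddAbove {W : Type*} [Fintype W] (G : SimpleGraph W) :
    BddAbove {n | ∃ s : Finset W, G.IsIndepVertexSet ↑s ∧ s.card = n} :=
  ⟨Fintype.card W, by rintro n ⟨s, -, rfl⟩; exact s.card_le_univ⟩

lemma aux_exists_max {W : Type*} [Fintype W] (G : SimpleGraph W) :
    ∃ s : Finset W, G.IsIndepVertexSet ↑s ∧ s.card = G.indepNumOld := by
  have h0 : (0 : ℕ) ∈ {n | ∃ s : Finset W, G.IsIndepVertexSet ↑s ∧ s.card = n} :=
    ⟨∅, by simp [SimpleGraph.IsIndepVertexSet], rfl⟩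
  exact Nat.sSup_mem ⟨0, h0⟩ (aux_bddAbove G)

lemma aux_card_le_indepNum {W : Type*} [Fintype W] (G : SimpleGraph W)
    (s : Finset W) (hs : G.IsIndepVertexSet ↑s) : s.card ≤ G.indepNumOld :=
  le_csSup (aux_bddAbove G) ⟨s, hs, rfl⟩

lemma aux_connected_of_hub {W : Type*} (H : SimpleGraph W) (v : W)
    (h : ∀ w, H.Reachable v w) : H.Connected := by
  have : Nonempty W := ⟨v⟩
  exact ⟨fun a b => (h a).symm.trans (h b)⟩

lemma aux_del_adj {W : Type*} (H : SimpleGraph W) (a : W)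
    (x y : ((⊤ : H.Subgraph).deleteVerts {a}).verts) :
    ((⊤ : H.Subgraph).deleteVerts {a}).coe.Adj x y ↔ H.Adj ↑x ↑y := by
  obtain ⟨x, hx⟩ := x; obtain ⟨y, hy⟩ := y
  simp only [SimpleGraph.Subgraph.deleteVerts_verts, SimpleGraph.Subgraph.verts_top,
    Set.mem_diff, Set.mem_univ, true_and, Set.mem_singleton_iff] at hx hy
  simp only [SimpleGraph.Subgraph.coe_adj, SimpleGraph.Subgraph.deleteVerts_adj,
    SimpleGraph.Subgraph.top_adj, SimpleGraph.Subgraph.verts_top, Set.mem_univ, true_and,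
    Set.mem_singleton_iff]
  tauto

lemma aux_del_mem {W : Type*} (H : SimpleGraph W) (a x : W) (hx : x ≠ a) :
    x ∈ ((⊤ : H.Subgraph).deleteVerts {a}).verts := by
  simp [hx]

lemma aux_reach_map {W W' : Type*} (H : SimpleGraph W) (H' : SimpleGraph W') (g : W → W')
    (hadj : ∀ a b, H.Adj a b → H'.Adj (g a) (g b)) {x y : W} (h : H.Reachable x y) :
    H'.Reachable (g x) (g y) :=
  h.map ⟨g, fun hab => hadj _ _ hab⟩

lemma aux_reach_to_del {W W' : Type*} (H : SimpleGraph W) (H' : SimpleGraph W') (g : W → W')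
    (hadj : ∀ a b, H.Adj a b → H'.Adj (g a) (g b)) (v' : W') (hg : ∀ x, g x ≠ v')
    (x y : W) (h : H.Reachable x y) :
    ((⊤ : H'.Subgraph).deleteVerts {v'}).coe.Reachable
      ⟨g x, aux_del_mem H' v' (g x) (hg x)⟩ ⟨g y, aux_del_mem H' v' (g y) (hg y)⟩ :=
  h.map ⟨fun w => ⟨g w, aux_del_mem H' v' (g w) (hg w)⟩,
     fun {a b} hab => (aux_del_adj H' v' _ _).2 (hadj a b hab)⟩

lemma aux_reach_del_map {W W' : Type*} (H : SimpleGraph W) (H' : SimpleGraph W') (g : W → W')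
    (hadj : ∀ a b, H.Adj a b → H'.Adj (g a) (g b))
    (v : W) (v' : W') (hg : ∀ z, z ≠ v → g z ≠ v')
    (x y : W) (hx : x ≠ v) (hy : y ≠ v)
    (h : ((⊤ : H.Subgraph).deleteVerts {v}).coe.Reachable
      ⟨x, aux_del_mem H v x hx⟩ ⟨y, aux_del_mem H v y hy⟩) :
    ((⊤ : H'.Subgraph).deleteVerts {v'}).coe.Reachable
      ⟨g x, aux_del_mem H' v' (g x) (hg x hx)⟩ ⟨g y, aux_del_mem H' v' (g y) (hg y hy)⟩ := by
  have hne : ∀ z : ((⊤ : H.Subgraph).deleteVerts {v}).verts, (z : W) ≠ v := by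
    rintro ⟨z, hz⟩
    simp only [SimpleGraph.Subgraph.deleteVerts_verts, SimpleGraph.Subgraph.verts_top,
      Set.mem_diff, Set.mem_univ, true_and, Set.mem_singleton_iff] at hz
    exact hz
  exact h.map ⟨fun z => ⟨g z, aux_del_mem H' v' (g z) (hg z (hne z))⟩,
     fun {a b} hab => (aux_del_adj H' v' _ _).2 (hadj _ _ ((aux_del_adj H v _ _).1 hab))⟩

/-- Gluing the internally triangulated gadget `Φ_k` (`k ≥ 4`) into a face of a
2-connected plane graph `G` bounded by the cycle `c₁, …, c_k` (given by the injective
map `f`): the gadget adds a `K₄` on new vertices `a = inr 0, b = inr 1, c = inr 2,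
d = inr 3`, the edges `(d, cᵢ)` for all `i`, and the edges `(c₁, b), (c₁, c), (c₂, c)`;
the vertex `a` has no neighbor among the original vertices. The resulting graph `G'`
is 2-connected and satisfies `α(G') = α(G) + 1`. -/
theorem phi_gadget_glue {V : Type*} [Fintype V] [DecidableEq V]
    (G : SimpleGraph V) (h2conn : G.TwoConnected)
    (k : ℕ) [NeZero k] (hk : 4 ≤ k)
    (f : Fin k → V) (hinj : Function.Injective f)
    (hcyc : ∀ i : Fin k, G.Adj (f i) (f (i + 1)))
    (G' : SimpleGraph (V ⊕ Fin 4))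
    (hGG : ∀ s t : V, G'.Adj (inl s) (inl t) ↔ G.Adj s t)
    (hA : ∀ s : V, ¬ G'.Adj (inl s) (inr 0))
    (hB : ∀ s : V, G'.Adj (inl s) (inr 1) ↔ s = f 0)
    (hC : ∀ s : V, G'.Adj (inl s) (inr 2) ↔ s = f 0 ∨ s = f 1)
    (hD : ∀ s : V, G'.Adj (inl s) (inr 3) ↔ ∃ i : Fin k, s = f i)
    (hK4 : ∀ i j : Fin 4, G'.Adj (inr i) (inr j) ↔ i ≠ j) :
    G'.TwoConnected ∧ G'.indepNumOld = G.indepNumOld + 1 := by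
  obtain ⟨hcard3, hconn, hdel⟩ := h2conn
  have hGadj : ∀ a b : V, G.Adj a b → G'.Adj (inl a) (inl b) := fun a b h => (hGG a b).2 h
  -- `inr i` adjacent to `inl (f 0)` for `i ≠ 0`
  have adjF0 : ∀ i : Fin 4, i ≠ 0 → G'.Adj (inl (f 0)) (inr i) := by
    intro i hi
    fin_cases i
    · exact absurd rfl hi
    · exact (hB (f 0)).2 rfl
    · exact (hC (f 0)).2 (Or.inl rfl)
    · exact (hD (f 0)).2 ⟨0, rfl⟩
  have h01 : (0 : Fin k) ≠ 1 := by
    intro h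
    have := congrArg Fin.val h
    rw [Fin.val_zero, Fin.val_one'] at this
    rw [Nat.mod_eq_of_lt (by omega)] at this
    exact absurd this (by omega)
  constructor
  · -- 2-connectivity of G'
    refine ⟨?_, ?_, ?_⟩
    · rw [Fintype.card_sum]; omega
    · -- connectivity
      apply aux_connected_of_hub G' (inr 3)
      intro w
      cases w with
      | inl s =>
        have hr : G'.Reachable (inl (f 0)) (inl s) :=
          aux_reach_map G G' inl hGadj (hconn.preconnected (f 0) s)
        exact (((hD (f 0)).2 ⟨0, rfl⟩).symm.reachable).trans hr
      | inr i =>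
        by_cases hi : i = 3
        · subst hi; exact SimpleGraph.Reachable.refl _
        · exact ((hK4 3 i).2 (Ne.symm hi)).reachable
    · -- no cutvertex
      rintro (v | j)
      · -- delete an original vertex `inl v`
        apply aux_connected_of_hub _ ⟨inr 3, aux_del_mem G' (inl v) (inr 3) (by simp)⟩
        rintro ⟨x, hx⟩
        cases x with
        | inr i =>
          by_cases hi : i = 3
          · subst hi; exact SimpleGraph.Reachable.refl _
          · exact ((aux_del_adj G' (inl v) _ _).2 ((hK4 3 i).2 (Ne.symm hi))).reachable
        | inl s =>
          have hsv : s ≠ v := by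
            simp only [SimpleGraph.Subgraph.deleteVerts_verts, SimpleGraph.Subgraph.verts_top,
              Set.mem_diff, Set.mem_univ, true_and, Set.mem_singleton_iff] at hx
            intro h; exact hx (by rw [h])
          -- choose i₀ with f i₀ ≠ v
          obtain ⟨i₀, hi₀⟩ : ∃ i₀ : Fin k, f i₀ ≠ v := by
            by_cases h0 : f 0 = v
            · exact ⟨1, fun h1 => h01 (hinj (h0.trans h1.symm))⟩
            · exact ⟨0, h0⟩
          have hr0 : ((⊤ : G.Subgraph).deleteVerts {v}).coe.Reachable
              ⟨s, aux_del_mem G v s hsv⟩ ⟨f i₀, aux_del_mem G v (f i₀) hi₀⟩ :=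
            (hdel v).preconnected _ _
          have hr1 : ((⊤ : G'.Subgraph).deleteVerts {inl v}).coe.Reachable
              ⟨inl s, aux_del_mem G' (inl v) (inl s) (by simp [hsv])⟩
              ⟨inl (f i₀), aux_del_mem G' (inl v) (inl (f i₀)) (by simp [hi₀])⟩ :=
            aux_reach_del_map G G' inl hGadj v (inl v) (by simp) s (f i₀) hsv hi₀ hr0
          have hadj3 : ((⊤ : G'.Subgraph).deleteVerts {inl v}).coe.Adj
              ⟨inr 3, aux_del_mem G' (inl v) (inr 3) (by simp)⟩
              ⟨inl (f i₀), aux_del_mem G' (inl v) (inl (f i₀)) (by simp [hi₀])⟩ :=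
            (aux_del_adj G' (inl v) _ _).2 (((hD (f i₀)).2 ⟨i₀, rfl⟩).symm)
          exact hadj3.reachable.trans hr1.symm
      · -- delete a gadget vertex `inr j`
        apply aux_connected_of_hub _ ⟨inl (f 0), aux_del_mem G' (inr j) (inl (f 0)) (by simp)⟩
        rintro ⟨x, hx⟩
        cases x with
        | inl s =>
          exact aux_reach_to_del G G' inl hGadj (inr j) (by simp) (f 0) s
            (hconn.preconnected (f 0) s)
        | inr i =>
          have hij : i ≠ j := by
            simp only [SimpleGraph.Subgraph.deleteVerts_verts, SimpleGraph.Subgraph.verts_top,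
              Set.mem_diff, Set.mem_univ, true_and, Set.mem_singleton_iff] at hx
            intro h; exact hx (by rw [h])
          by_cases hi0 : i = 0
          · subst hi0
            -- go through an intermediate gadget vertex m ≠ 0, m ≠ j
            obtain ⟨m, hm0, hmj⟩ : ∃ m : Fin 4, m ≠ 0 ∧ m ≠ j := by
              by_cases hj3 : j = 3
              · exact ⟨1, by decide, by rw [hj3]; decide⟩
              · exact ⟨3, by decide, fun h => hj3 h.symm⟩
            have h1 : ((⊤ : G'.Subgraph).deleteVerts {inr j}).coe.Adj
                ⟨inl (f 0), aux_del_mem G' (inr j) (inl (f 0)) (by simp)⟩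
                ⟨inr m, aux_del_mem G' (inr j) (inr m) (by simp [hmj])⟩ :=
              (aux_del_adj G' (inr j) _ _).2 (adjF0 m hm0)
            have h2 : ((⊤ : G'.Subgraph).deleteVerts {inr j}).coe.Adj
                ⟨inr m, aux_del_mem G' (inr j) (inr m) (by simp [hmj])⟩
                ⟨inr 0, aux_del_mem G' (inr j) (inr 0) (by simp [hij])⟩ :=
              (aux_del_adj G' (inr j) _ _).2 ((hK4 m 0).2 hm0)
            exact h1.reachable.trans h2.reachable
          · exact ((aux_del_adj G' (inr j) _ _).2 (adjF0 i hi0)).reachable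
  · -- independence number
    apply le_antisymm
    · -- α(G') ≤ α(G) + 1
      obtain ⟨t, ht, htc⟩ := aux_exists_max G'
      rw [← htc, ← t.card_toLeft_add_card_toRight]
      have hR : t.toRight.card ≤ 1 := by
        refine Finset.card_le_one.2 fun a ha b hb => ?_
        rw [Finset.mem_toRight] at ha hb
        by_contra hne
        exact ht (Finset.mem_coe.2 ha) (Finset.mem_coe.2 hb)
          (fun h => hne (inr_injective h)) ((hK4 a b).2 hne)
      have hL : G.IsIndepVertexSet ↑t.toLeft := by
        intro a ha b hb hab hadj
        rw [Finset.mem_coe, Finset.mem_toLeft] at ha hb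
        exact ht (Finset.mem_coe.2 ha) (Finset.mem_coe.2 hb)
          (fun h => hab (inl_injective h)) ((hGG a b).2 hadj)
      have := aux_card_le_indepNum G t.toLeft hL
      omega
    · -- α(G) + 1 ≤ α(G')
      obtain ⟨s, hs, hsc⟩ := aux_exists_max G
      have hmem : (inr 0 : V ⊕ Fin 4) ∉ s.image inl := by simp
      have hind : G'.IsIndepVertexSet (↑(insert (inr 0) (s.image (inl : V → V ⊕ Fin 4))) : Set (V ⊕ Fin 4)) := by
        intro x hx y hy hxy
        simp only [Finset.coe_insert, Set.mem_insert_iff, Finset.coe_image, Set.mem_image,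
          Finset.mem_coe] at hx hy
        rcases hx with rfl | ⟨a, ha, rfl⟩ <;> rcases hy with rfl | ⟨b, hb, rfl⟩
        · exact absurd rfl hxy
        · exact fun hadj => hA b hadj.symm
        · exact hA a
        · exact fun hadj => hs (Finset.mem_coe.2 ha) (Finset.mem_coe.2 hb)
            (fun h => hxy (by rw [h])) ((hGG a b).1 hadj)
      have := aux_card_le_indepNum G' _ hind
      rw [Finset.card_insert_of_notMem hmem,
        Finset.card_image_of_injective _ inl_injective, hsc] at this
      exact this
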